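/- arXiv:1711.02502 — 2 statements merged into one kernel-verified Lean document; each statement's English description precedes it below -/
import Mathlib

section
/- There exists a circulant weighing matrix CW(99, 25); that is, there exists a vector a ∈ {0, 1, −1}^{99} such that the circulant matrix W = c(a) satisfies W Wᵀ = 25 I, where I is the 99×99 identity matrix. -/
open Matrix

/-- The circulant matrix `c(a)` with entries `c(a)_{i,j} = a_{(j-i) mod n}`. -/
def circ {n : ℕ} (a : Fin n → ℝ) : Matrix (Fin n) (Fin n) ℝ :=
  Matrix.of fun i j => a (j - i)

def cwList : List ℤ :=
  [0, 0, 0, 1, 0, 0, -1, 0, 0, -1, 0, 0, 1, 0, 0, 1, 0, 0, 0, 0, 0, -1, 0, 0,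
   -1, 0, 0, -1, 0, 0, -1, 0, 0, 0, 0, 0, -1, 0, 0, -1, 0, 0, 1, 0, 0, -1, 0,
   0, 1, 0, 0, -1, 0, 0, 0, 0, 0, -1, 0, 0, 1, 0, 0, 0, 0, 0, 0, 0, 0, 1, 0,
   0, 0, 0, 0, 1, 0, 0, 1, 0, 0, -1, 0, 0, -1, 0, 0, -1, 0, 0, 0, 0, 0, 1, 0,
   0, -1, 0, 0]

def cwVec : Fin 99 → ℤ := fun i => cwList.getD i.val 0

set_option maxRecDepth 10000 in
lemma cwVec_mem : ∀ s, cwVec s = 0 ∨ cwVec s = 1 ∨ cwVec s = -1 := by decide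

set_option maxRecDepth 100000 in
set_option maxHeartbeats 1000000 in
lemma cwVec_corr : ∀ d : Fin 99,
    (∑ t : Fin 99, cwVec t * cwVec (t + d)) = if d = 0 then 25 else 0 := by decide

/-- There exists a circulant weighing matrix `CW(99, 25)`. -/
theorem exists_CW_99_25 :
    ∃ a : Fin 99 → ℝ, (∀ s, a s ∈ ({0, 1, -1} : Set ℝ)) ∧
      circ a * (circ a)ᵀ = (25 : ℝ) • (1 : Matrix (Fin 99) (Fin 99) ℝ) := by
  refine ⟨fun i => ((cwVec i : ℤ) : ℝ), ?_, ?_⟩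
  · intro s
    rcases cwVec_mem s with h | h | h <;> simp [h]
  · ext i j
    have e := Equiv.sum_comp (Equiv.addRight i)
      (fun k : Fin 99 => ((cwVec (k - i) : ℤ) : ℝ) * ((cwVec (k - j) : ℤ) : ℝ))
    simp only [Equiv.coe_addRight, add_sub_cancel_right] at e
    have key := cwVec_corr (i - j)
    have hij : (i - j = 0) ↔ (i = j) := sub_eq_zero
    simp only [circ, Matrix.mul_apply, Matrix.transpose_apply, Matrix.of_apply,
      Matrix.smul_apply, Matrix.one_apply, smul_eq_mul]
    rw [← e]
    have : ∀ t : Fin 99, t + i - j = t + (i - j) := fun t => add_sub_assoc t i j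
    calc ∑ t : Fin 99, ((cwVec t : ℤ) : ℝ) * ((cwVec (t + i - j) : ℤ) : ℝ)
        = ((∑ t : Fin 99, cwVec t * cwVec (t + (i - j)) : ℤ) : ℝ) := by
          push_cast; simp only [this]
      _ = if i = j then 25 else 0 := by
          rw [key]; by_cases h : i = j <;> simp [h, hij.mpr, hij]
      _ = 25 * (if i = j then (1:ℝ) else 0) := by by_cases h : i = j <;> simp [h]
end

section
/- There exists a circulant weighing matrix CW(196, 16); that is, there exists a vector a ∈ {0, 1, −1}^{196} such that the circulant matrix W = c(a) satisfies W Wᵀ = 16 I, where I is the 196×196 identity matrix. -/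
open Matrix

def f : ℕ → ℤ := fun m =>
  match m with
  | 14 => 1 | 28 => 1 | 35 => -1 | 42 => -1
  | 63 => -1 | 77 => 1 | 84 => 1 | 91 => 1
  | 112 => 1 | 126 => 1 | 133 => 1 | 140 => -1
  | 161 => 1 | 175 => -1 | 182 => 1 | 189 => -1
  | _ => 0

def S : Finset ℕ := {14,28,35,42,63,77,84,91,112,126,133,140,161,175,182,189}

lemma hsub : S ⊆ Finset.range 196 := by decide

set_option maxRecDepth 10000 in
lemma hzero : ∀ m ∈ Finset.range 196, m ∉ S → f m = 0 := by decide

set_option maxRecDepth 100000 in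
set_option maxHeartbeats 8000000 in
lemma keyS : ∀ s ∈ Finset.range 196,
    (∑ m ∈ S, f m * f ((m + s) % 196)) = if s = 0 then 16 else 0 := by decide

lemma keyN : ∀ s ∈ Finset.range 196,
    (∑ m ∈ Finset.range 196, f m * f ((m + s) % 196)) = if s = 0 then 16 else 0 := by
  intro s hs
  rw [← Finset.sum_subset hsub (fun m _ hns => by rw [hzero m ‹_› hns, zero_mul])]
  exact keyS s hs

def aZ (j : Fin 196) : ℤ := f j.val

set_option maxRecDepth 10000 in
lemma aZ_mem : ∀ s : Fin 196, aZ s = 0 ∨ aZ s = 1 ∨ aZ s = -1 := by decide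

lemma key : ∀ s : Fin 196,
    (∑ k : Fin 196, aZ k * aZ (k + s)) = if s = 0 then 16 else 0 := by
  intro s
  have h1 : (∑ k : Fin 196, aZ k * aZ (k + s))
      = ∑ m ∈ Finset.range 196, f m * f ((m + s.val) % 196) := by
    rw [← Fin.sum_univ_eq_sum_range (fun m => f m * f ((m + s.val) % 196))]
    refine Finset.sum_congr rfl (fun k _ => ?_)
    simp [aZ, Fin.val_add]
  rw [h1, keyN s.val (Finset.mem_range.mpr s.isLt)]
  congr 1
  simp only [Fin.val_eq_zero_iff]

/-- There exists a circulant weighing matrix `CW(196, 16)`. -/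
theorem exists_CW_196_16 :
    ∃ a : Fin 196 → ℝ, (∀ s, a s ∈ ({0, 1, -1} : Set ℝ)) ∧
      circ a * (circ a)ᵀ = (16 : ℝ) • (1 : Matrix (Fin 196) (Fin 196) ℝ) := by
  refine ⟨fun j => (aZ j : ℝ), ?_, ?_⟩
  · intro s
    rcases aZ_mem s with h | h | h <;> simp [h]
  · ext i j
    have hZ : (∑ k : Fin 196, aZ (k - i) * aZ (k - j)) = if i = j then 16 else 0 := by
      have hk := key (j - i)
      calc (∑ k : Fin 196, aZ (k - i) * aZ (k - j))
          = ∑ m : Fin 196, aZ (m + j - i) * aZ m := by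
            refine Fintype.sum_equiv (Equiv.subRight j) _ _ (fun k => ?_)
            simp [Equiv.subRight, sub_add_eq_add_sub]
        _ = ∑ m : Fin 196, aZ m * aZ (m + (j - i)) := by
            refine Finset.sum_congr rfl (fun m _ => ?_)
            rw [mul_comm, add_sub_assoc]
        _ = if i = j then 16 else 0 := by
            rw [hk]
            congr 1
            simp [sub_eq_zero, eq_comm]
    simp only [circ, Matrix.mul_apply, Matrix.transpose_apply, Matrix.of_apply,
      Matrix.smul_apply, Matrix.one_apply, smul_eq_mul]
    have hc : ((∑ k : Fin 196, aZ (k - i) * aZ (k - j) : ℤ) : ℝ)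
        = ∑ x : Fin 196, ((aZ (x - i) : ℝ) * (aZ (x - j) : ℝ)) := by
      push_cast
      rfl
    rw [← hc, hZ]
    split <;> simp
end
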